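/- Alternately applying Compress and Rake operations ⌈log_k n⌉ + 1 times removes all vertices from any n-vertex tree T, where Rake removes all leaves and isolated vertices, and Compress (with parameter k ≥ 2) removes all vertices v such that every vertex u in the closed neighborhood of v has degree at most k in the current tree. -/

import Mathlib

/-- Degree of `v` inside the sub-forest induced on the vertex set `A`. -/
noncomputable def degIn {V : Type*} (T : SimpleGraph V) (A : Set V) (v : V) : ℕ :=
  {w | w ∈ A ∧ T.Adj v w}.ncard

/-- Rake: remove all leaves and isolated vertices of the current forest. -/
noncomputable def rakeStep {V : Type*} (T : SimpleGraph V) (A : Set V) : Set V :=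
  {v | v ∈ A ∧ 2 ≤ degIn T A v}

/-- Compress (parameter `k`): remove every vertex `v` such that every vertex in
the closed neighborhood of `v` (within the current forest) has degree at most `k`. -/
noncomputable def compressStep {V : Type*} (T : SimpleGraph V) (k : ℕ) (A : Set V) : Set V :=
  {v | v ∈ A ∧ ∃ u, (u = v ∨ (u ∈ A ∧ T.Adj v u)) ∧ k < degIn T A u}

open SimpleGraph Walk Set

namespace Stmt11Aux

variable {V : Type*} [DecidableEq V]

/-- Uniqueness of paths in a tree, stated for walks. -/
lemma walk_unique {T : SimpleGraph V} (hT : T.IsTree) {a b : V} {p q : T.Walk a b}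
    (hp : p.IsPath) (hq : q.IsPath) : p = q :=
  congrArg Subtype.val (hT.IsAcyclic.path_unique ⟨p, hp⟩ ⟨q, hq⟩)

/-- In a tree, any path has length equal to the distance between its endpoints. -/
lemma length_eq_dist {T : SimpleGraph V} (hT : T.IsTree) {a b : V}
    {p : T.Walk a b} (hp : p.IsPath) : p.length = T.dist a b := by
  refine le_antisymm ?_ (SimpleGraph.dist_le p)
  obtain ⟨q, hq⟩ := (hT.isConnected.preconnected a b).exists_walk_length_eq_dist
  have h1 : p = q.bypass := walk_unique hT hp q.bypass_isPath
  rw [h1, ← hq]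
  exact q.length_bypass_le

/-- In a tree, two neighbors of `v` which are both strictly closer to `w`
must coincide. -/
lemma second_eq {T : SimpleGraph V} (hT : T.IsTree) {v w c1 c2 : V}
    (h1 : T.Adj v c1) (h2 : T.Adj v c2)
    (hd1 : T.dist c1 w + 1 = T.dist v w) (hd2 : T.dist c2 w + 1 = T.dist v w) :
    c1 = c2 := by
  have key : ∀ {c : V}, T.Adj v c → T.dist c w + 1 = T.dist v w →
      ∃ (p : T.Walk v w), p.IsPath ∧ p.getVert 1 = c := by
    intro c hadj hd
    obtain ⟨p, hp, -⟩ := hT.existsUnique_path c w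
    have hlen : p.length = T.dist c w := length_eq_dist hT hp
    have hvp : v ∉ p.support := by
      intro hv
      have h3 : (p.takeUntil v hv).length = T.dist c v := length_eq_dist hT (hp.takeUntil hv)
      have h4 : (p.dropUntil v hv).length = T.dist v w := length_eq_dist hT (hp.dropUntil hv)
      have h5 := congrArg Walk.length (p.take_spec hv)
      rw [Walk.length_append, h3, h4, hlen] at h5
      have hpos : 0 < T.dist c v :=
        (hT.isConnected.preconnected c v).pos_dist_of_ne hadj.ne'
      omega
    refine ⟨Walk.cons hadj p, ?_, ?_⟩
    · rw [Walk.cons_isPath_iff]; exact ⟨hp, hvp⟩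
    · rw [Walk.getVert_cons_succ, Walk.getVert_zero]
  obtain ⟨p1, hp1, hg1⟩ := key h1 hd1
  obtain ⟨p2, hp2, hg2⟩ := key h2 hd2
  rw [← hg1, ← hg2, walk_unique hT hp1 hp2]

/-- Every edge of a tree changes the distance to a fixed vertex `r` by exactly one. -/
lemma adj_dist {T : SimpleGraph V} (hT : T.IsTree) (r : V) {v u : V} (h : T.Adj v u) :
    T.dist r u = T.dist r v + 1 ∨ T.dist r v = T.dist r u + 1 := by
  obtain ⟨q, hq, -⟩ := hT.existsUnique_path r v
  have hlen : q.length = T.dist r v := length_eq_dist hT hq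
  by_cases hu : u ∈ q.support
  · right
    have h3 : (q.takeUntil u hu).length = T.dist r u := length_eq_dist hT (hq.takeUntil hu)
    have h4 : (q.dropUntil u hu).length = T.dist u v := length_eq_dist hT (hq.dropUntil hu)
    have h5 := congrArg Walk.length (q.take_spec hu)
    rw [Walk.length_append, h3, h4, hlen] at h5
    have h6 : T.dist u v = 1 := SimpleGraph.dist_eq_one_iff_adj.2 h.symm
    omega
  · left
    have hpath : (q.concat h).IsPath := by
      rw [← Walk.isPath_reverse_iff, Walk.reverse_concat, Walk.cons_isPath_iff]
      refine ⟨hq.reverse, ?_⟩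
      rwa [Walk.support_reverse, List.mem_reverse]
    have := length_eq_dist hT hpath
    rw [Walk.length_concat, hlen] at this
    omega

variable [Fintype V]

/-- The subtree (rooted at `r`) below `v`. -/
def sub (T : SimpleGraph V) (r v : V) : Set V :=
  {w | T.dist r w = T.dist r v + T.dist v w}

/-- Size of the subtree below `v`. -/
noncomputable def sz (T : SimpleGraph V) (r v : V) : ℕ := (sub T r v).ncard

lemma self_mem_sub (T : SimpleGraph V) (r v : V) : v ∈ sub T r v := by
  simp [sub, SimpleGraph.dist_self]

lemma one_le_sz (T : SimpleGraph V) (r v : V) : 1 ≤ sz T r v :=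
  (Set.ncard_pos (Set.toFinite _)).2 ⟨v, self_mem_sub T r v⟩

lemma sub_trans {T : SimpleGraph V} (hc : T.Connected) {r v w : V}
    (hw : w ∈ sub T r v) : sub T r w ⊆ sub T r v := by
  intro x hx
  have h1 : T.dist r x ≤ T.dist r v + T.dist v x := hc.dist_triangle
  have h2 : T.dist v x ≤ T.dist v w + T.dist w x := hc.dist_triangle
  have hw' : T.dist r w = T.dist r v + T.dist v w := hw
  have hx' : T.dist r x = T.dist r w + T.dist w x := hx
  show T.dist r x = T.dist r v + T.dist v x
  omega

lemma child_mem_sub {T : SimpleGraph V} {r v c : V}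
    (hadj : T.Adj v c) (hd : T.dist r c = T.dist r v + 1) : c ∈ sub T r v := by
  have h1 : T.dist v c = 1 := SimpleGraph.dist_eq_one_iff_adj.2 hadj
  show T.dist r c = T.dist r v + T.dist v c
  omega

lemma child_sub_subset {T : SimpleGraph V} (hT : T.IsTree) {r v c : V}
    (hadj : T.Adj v c) (hd : T.dist r c = T.dist r v + 1) :
    sub T r c ⊆ sub T r v \ {v} := by
  intro w hw
  have hw' : T.dist r w = T.dist r c + T.dist c w := hw
  refine ⟨sub_trans hT.isConnected (child_mem_sub hadj hd) hw, ?_⟩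
  intro hwv
  rw [Set.mem_singleton_iff] at hwv
  subst hwv
  omega

lemma child_sub_disjoint {T : SimpleGraph V} (hT : T.IsTree) {r v c1 c2 : V}
    (h1 : T.Adj v c1) (h2 : T.Adj v c2) (hne : c1 ≠ c2)
    (hd1 : T.dist r c1 = T.dist r v + 1) (hd2 : T.dist r c2 = T.dist r v + 1) :
    Disjoint (sub T r c1) (sub T r c2) := by
  rw [Set.disjoint_left]
  intro w hw1 hw2
  have hw1' : T.dist r w = T.dist r c1 + T.dist c1 w := hw1
  have hw2' : T.dist r w = T.dist r c2 + T.dist c2 w := hw2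
  have hm : T.dist c1 w = T.dist c2 w := by omega
  have htri : T.dist v w ≤ T.dist v c1 + T.dist c1 w := hT.isConnected.dist_triangle (u := v) (v := c1) (w := w)
  have htr2 : T.dist r w ≤ T.dist r v + T.dist v w := hT.isConnected.dist_triangle (u := r) (v := v) (w := w)
  have hvc1 : T.dist v c1 = 1 := SimpleGraph.dist_eq_one_iff_adj.2 h1
  have hvw : T.dist v w = T.dist c1 w + 1 := by omega
  exact hne (second_eq hT (w := w) h1 h2 (by omega) (by omega))

end Stmt11Aux

namespace Stmt11Aux2
open Stmt11Aux

variable {V : Type*} [Fintype V] [DecidableEq V]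

/-- Key degree bound: if every vertex of `A` has subtree size at least `k ^ i`,
then any vertex of `A` whose subtree has fewer than `k ^ (i+1)` vertices has
degree at most `k` inside `A`. -/
lemma degBound {T : SimpleGraph V} (hT : T.IsTree) (r : V) {k i : ℕ} (hk : 2 ≤ k)
    {A : Set V} (hA : ∀ x ∈ A, k ^ i ≤ sz T r x)
    {w : V} (hw : w ∈ A) (hsz : sz T r w < k ^ (i + 1)) :
    degIn T A w ≤ k := by
  set C : Set V := {c | c ∈ A ∧ T.Adj w c ∧ T.dist r c = T.dist r w + 1} with hC
  have hCf : C.Finite := Set.toFinite _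
  -- the subtrees of the "children" of `w` are disjoint subsets of `sub T r w \ {w}`
  have hdisj : ∀ c1 ∈ hCf.toFinset, ∀ c2 ∈ hCf.toFinset, c1 ≠ c2 →
      Disjoint ((Set.toFinite (sub T r c1)).toFinset) ((Set.toFinite (sub T r c2)).toFinset) := by
    intro c1 hc1 c2 hc2 hne
    rw [Set.Finite.disjoint_toFinset]
    rw [Set.Finite.mem_toFinset] at hc1 hc2
    exact child_sub_disjoint hT hc1.2.1 hc2.2.1 hne hc1.2.2 hc2.2.2
  have hcard := Finset.card_biUnion hdisj
  have hsubset : hCf.toFinset.biUnion (fun c => (Set.toFinite (sub T r c)).toFinset) ⊆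
      (Set.toFinite (sub T r w \ {w})).toFinset := by
    intro x hx
    rw [Finset.mem_biUnion] at hx
    obtain ⟨c, hc, hxc⟩ := hx
    rw [Set.Finite.mem_toFinset] at hc hxc ⊢
    exact child_sub_subset hT hc.2.1 hc.2.2 hxc
  have hsum : hCf.toFinset.card * k ^ i ≤
      ∑ c ∈ hCf.toFinset, ((Set.toFinite (sub T r c)).toFinset).card := by
    have := Finset.card_nsmul_le_sum hCf.toFinset
      (fun c => ((Set.toFinite (sub T r c)).toFinset).card) (k ^ i) ?_
    · simpa [smul_eq_mul] using this
    · intro c hc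
      rw [Set.Finite.mem_toFinset] at hc
      show k ^ i ≤ ((Set.toFinite (sub T r c)).toFinset).card
      rw [← Set.ncard_eq_toFinset_card (sub T r c) (Set.toFinite _)]
      exact hA c hc.1
  have hcard2 : hCf.toFinset.card * k ^ i ≤ sz T r w - 1 := by
    calc hCf.toFinset.card * k ^ i
        ≤ (hCf.toFinset.biUnion (fun c => (Set.toFinite (sub T r c)).toFinset)).card := by
          rw [hcard]; exact hsum
      _ ≤ ((Set.toFinite (sub T r w \ {w})).toFinset).card := Finset.card_le_card hsubset
      _ = (sub T r w \ {w}).ncard := (Set.ncard_eq_toFinset_card _ _).symm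
      _ = sz T r w - 1 := Set.ncard_diff_singleton_of_mem (self_mem_sub T r w)
  have hszpos : 1 ≤ sz T r w := one_le_sz T r w
  have hklt : hCf.toFinset.card < k := by
    have hkpos : 0 < k ^ i := Nat.pow_pos (by omega)
    have : hCf.toFinset.card * k ^ i < k * k ^ i := by
      have hpow : k ^ (i + 1) = k * k ^ i := by ring
      omega
    exact Nat.lt_of_mul_lt_mul_right this
  -- every neighbor of `w` inside `A` is either a "child" or the unique "parent"
  have hP : {u | T.Adj w u ∧ T.dist r u + 1 = T.dist r w}.ncard ≤ 1 := by
    rw [Set.ncard_le_one (Set.toFinite _)]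
    intro a ha b hb
    obtain ⟨ha1, ha2⟩ := ha
    obtain ⟨hb1, hb2⟩ := hb
    have e1 : T.dist a r = T.dist r a := SimpleGraph.dist_comm
    have e2 : T.dist b r = T.dist r b := SimpleGraph.dist_comm
    have e3 : T.dist w r = T.dist r w := SimpleGraph.dist_comm
    exact second_eq hT (w := r) ha1 hb1 (by omega) (by omega)
  have hsubN : {x | x ∈ A ∧ T.Adj w x} ⊆
      C ∪ {u | T.Adj w u ∧ T.dist r u + 1 = T.dist r w} := by
    rintro x ⟨hxA, hxadj⟩
    rcases adj_dist hT r hxadj with h1 | h2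
    · exact Or.inl ⟨hxA, hxadj, h1⟩
    · exact Or.inr ⟨hxadj, by omega⟩
  calc degIn T A w = {x | x ∈ A ∧ T.Adj w x}.ncard := rfl
    _ ≤ (C ∪ {u | T.Adj w u ∧ T.dist r u + 1 = T.dist r w}).ncard :=
        Set.ncard_le_ncard hsubN (Set.toFinite _)
    _ ≤ C.ncard + {u | T.Adj w u ∧ T.dist r u + 1 = T.dist r w}.ncard := Set.ncard_union_le _ _
    _ ≤ C.ncard + 1 := by omega
    _ ≤ k := by rw [Set.ncard_eq_toFinset_card C hCf]; omega

end Stmt11Aux2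

namespace Stmt11Aux3
open Stmt11Aux Stmt11Aux2

variable {V : Type*} [Fintype V] [DecidableEq V]

lemma main {T : SimpleGraph V} (hT : T.IsTree) (r : V) {k : ℕ} (hk : 2 ≤ k) (i : ℕ) :
    (fun A => rakeStep T (compressStep T k A))^[i] Set.univ ⊆ {v | k ^ i ≤ sz T r v} := by
  induction i with
  | zero => intro v _; simpa using one_le_sz T r v
  | succ i ih =>
    rw [Function.iterate_succ_apply']
    set A := (fun A => rakeStep T (compressStep T k A))^[i] Set.univ with hAdef
    intro v hv
    rw [Set.mem_setOf_eq]
    by_contra hlt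
    push_neg at hlt
    have hA : ∀ x ∈ A, k ^ i ≤ sz T r x := fun x hx => ih hx
    obtain ⟨hvB, hdeg2⟩ := hv
    have hvA : v ∈ A := hvB.1
    -- every vertex of `A` lying in the subtree of `v` has degree at most `k` in `A`
    have hbound : ∀ x ∈ A, x ∈ sub T r v → degIn T A x ≤ k := by
      intro x hxA hxS
      refine degBound hT r hk hA hxA ?_
      calc sz T r x ≤ sz T r v :=
            Set.ncard_le_ncard (sub_trans hT.isConnected hxS) (Set.toFinite _)
        _ < k ^ (i + 1) := hlt
    -- every neighbor of `v` surviving Compress is a "parent" of `v`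
    have hsub1 : {x | x ∈ compressStep T k A ∧ T.Adj v x} ⊆
        {u | T.Adj v u ∧ T.dist r u + 1 = T.dist r v} := by
      rintro x ⟨hxB, hadj⟩
      refine ⟨hadj, ?_⟩
      rcases adj_dist hT r hadj with hchild | hpar
      · -- `x` is a child of `v`; it cannot survive Compress
        exfalso
        obtain ⟨hxA, u, hu, hku⟩ := hxB
        have hle : degIn T A u ≤ k := by
          rcases hu with heq | ⟨huA, hadjxu⟩
          · rw [heq]
            exact hbound x hxA (child_mem_sub hadj hchild)
          · rcases adj_dist hT r hadjxu with h1 | h2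
            · exact hbound u huA
                (sub_trans hT.isConnected (child_mem_sub hadj hchild)
                  (child_mem_sub hadjxu h1))
            · have e1 : T.dist u r = T.dist r u := SimpleGraph.dist_comm
              have e2 : T.dist v r = T.dist r v := SimpleGraph.dist_comm
              have e3 : T.dist x r = T.dist r x := SimpleGraph.dist_comm
              have huv : u = v :=
                second_eq hT (w := r) hadjxu hadj.symm (by omega) (by omega)
              rw [huv]
              exact hbound v hvA (self_mem_sub T r v)
        omega
      · omega
    have hP1 : {u | T.Adj v u ∧ T.dist r u + 1 = T.dist r v}.ncard ≤ 1 := by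
      rw [Set.ncard_le_one (Set.toFinite _)]
      intro a ha b hb
      obtain ⟨ha1, ha2⟩ := ha
      obtain ⟨hb1, hb2⟩ := hb
      have e1 : T.dist a r = T.dist r a := SimpleGraph.dist_comm
      have e2 : T.dist b r = T.dist r b := SimpleGraph.dist_comm
      have e3 : T.dist v r = T.dist r v := SimpleGraph.dist_comm
      exact second_eq hT (w := r) ha1 hb1 (by omega) (by omega)
    have hd1 : degIn T (compressStep T k A) v ≤ 1 :=
      le_trans (Set.ncard_le_ncard hsub1 (Set.toFinite _)) hP1
    omega

end Stmt11Aux3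

/-- Alternately applying Compress and Rake `⌈log_k n⌉ + 1` times removes all
vertices from any `n`-vertex tree. -/
theorem stmt11 {V : Type*} [Fintype V] (T : SimpleGraph V) (hT : T.IsTree)
    (k : ℕ) (hk : 2 ≤ k) :
    (fun A => rakeStep T (compressStep T k A))^[Nat.clog k (Fintype.card V) + 1]
      Set.univ = ∅ := by
  classical
  cases isEmpty_or_nonempty V with
  | inl h => exact Set.eq_empty_of_isEmpty _
  | inr h =>
    obtain ⟨r⟩ := h
    rw [Set.eq_empty_iff_forall_notMem]
    intro v hv
    have h1 := Stmt11Aux3.main (T := T) hT r hk (Nat.clog k (Fintype.card V) + 1) hv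
    rw [Set.mem_setOf_eq] at h1
    have h2 : Stmt11Aux.sz T r v ≤ Fintype.card V := by
      have := Set.ncard_le_ncard (Set.subset_univ (Stmt11Aux.sub T r v)) (Set.toFinite _)
      rwa [Set.ncard_univ, Nat.card_eq_fintype_card] at this
    have h3 : Fintype.card V ≤ k ^ Nat.clog k (Fintype.card V) :=
      Nat.le_pow_clog (by omega) _
    have h4 : k ^ Nat.clog k (Fintype.card V) < k ^ (Nat.clog k (Fintype.card V) + 1) :=
      Nat.pow_lt_pow_succ (by omega)
    omega
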